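/- Let x ∈ [1,∞)⁶ and i ∈ {2,3,5,6}. If ∂φ/∂xᵢ(x) ≤ 0, then for all t, s ≤ 0 such that x + t·mᵢ + s·m_{î} ∈ [1,∞)⁶ one has ∂φ/∂xᵢ(x + t·mᵢ + s·m_{î}) ≤ 0. In particular, φ(x) ≤ φ(y) for every y with 1 ≤ yᵢ ≤ xᵢ and y_j = x_j for all j ≠ i. -/

import Mathlib

open Real

/-- The cosine of the dihedral angle at the edge `e₁` of a generalized hyper-ideal
tetrahedron whose edge lengths `lᵢ` satisfy `cosh lᵢ = xᵢ`. -/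
noncomputable def phi (x1 x2 x3 x4 x5 x6 : ℝ) : ℝ :=
  (x2 * x3 + x5 * x6 + x1 * x2 * x5 + x1 * x3 * x6 - x1 ^ 2 * x4 + x4) /
    (Real.sqrt (2 * x1 * x2 * x6 + x1 ^ 2 + x2 ^ 2 + x6 ^ 2 - 1) *
      Real.sqrt (2 * x1 * x3 * x5 + x1 ^ 2 + x3 ^ 2 + x5 ^ 2 - 1))

/-- `phi` as a function of a vector `x : Fin 6 → ℝ`, where `x ⟨k-1⟩` plays the
role of the coordinate `x_k`, `k = 1, …, 6`. -/
noncomputable def phiV (x : Fin 6 → ℝ) : ℝ :=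
  phi (x 0) (x 1) (x 2) (x 3) (x 4) (x 5)

/-- The partial derivative `∂φ/∂x_{i+1}` of `phiV` in the `i`-th coordinate at `x`. -/
noncomputable def pphi (i : Fin 6) (x : Fin 6 → ℝ) : ℝ :=
  deriv (fun u => phiV (Function.update x i u)) (x i)

/-- The pairing `2̂ = 5, 3̂ = 6, 5̂ = 2, 6̂ = 3` of the indices `{2,3,5,6}`; in the
`0`-based indexing of `Fin 6` the pairs are `(1,4), (2,5), (4,1), (5,2)`. -/
def IsPairedIndex (i ih : Fin 6) : Prop :=
  (i = 1 ∧ ih = 4) ∨ (i = 2 ∧ ih = 5) ∨ (i = 4 ∧ ih = 1) ∨ (i = 5 ∧ ih = 2)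

lemma quadA_pos {a b f : ℝ} (ha : 1 ≤ a) (hb : 1 ≤ b) (hf : 1 ≤ f) :
    0 < 2 * a * b * f + a ^ 2 + b ^ 2 + f ^ 2 - 1 := by
  nlinarith [mul_nonneg (mul_nonneg (by linarith : (0:ℝ) ≤ a) (by linarith : (0:ℝ) ≤ b))
    (by linarith : (0:ℝ) ≤ f), sq_nonneg (a - 1), sq_nonneg (b - 1), sq_nonneg (f - 1)]

lemma hasDerivAt_phi2 (a c d e f b : ℝ) (ha : 1 ≤ a) (hc : 1 ≤ c) (he : 1 ≤ e)
    (hf : 1 ≤ f) (hb : 1 ≤ b) :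
    HasDerivAt (fun u => phi a u c d e f)
      ((a ^ 2 - 1) * ((b + a * f) * (d + e * f) - (c + a * e) * (f ^ 2 - 1)) /
        ((2 * a * b * f + a ^ 2 + b ^ 2 + f ^ 2 - 1) *
          Real.sqrt (2 * a * b * f + a ^ 2 + b ^ 2 + f ^ 2 - 1) *
          Real.sqrt (2 * a * c * e + a ^ 2 + c ^ 2 + e ^ 2 - 1))) b := by
  have hA : 0 < 2 * a * b * f + a ^ 2 + b ^ 2 + f ^ 2 - 1 := quadA_pos ha hb hf
  have hB : 0 < 2 * a * c * e + a ^ 2 + c ^ 2 + e ^ 2 - 1 := quadA_pos ha hc he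
  set A := 2 * a * b * f + a ^ 2 + b ^ 2 + f ^ 2 - 1 with hAdef
  set B := 2 * a * c * e + a ^ 2 + c ^ 2 + e ^ 2 - 1 with hBdef
  have hsA : 0 < Real.sqrt A := Real.sqrt_pos.mpr hA
  have hsB : 0 < Real.sqrt B := Real.sqrt_pos.mpr hB
  have hQ : HasDerivAt (fun u : ℝ => 2 * a * u * f + a ^ 2 + u ^ 2 + f ^ 2 - 1)
      (2 * a * f + 2 * b) b := by
    have h1 : HasDerivAt (fun u : ℝ => u ^ 2 + (2 * a * f) * u + (a ^ 2 + f ^ 2 - 1))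
        (2 * b + 2 * a * f) b := by
      simpa using ((hasDerivAt_pow 2 b).add (((hasDerivAt_id b).const_mul (2 * a * f)))).add_const
        (a ^ 2 + f ^ 2 - 1)
    have : (fun u : ℝ => 2 * a * u * f + a ^ 2 + u ^ 2 + f ^ 2 - 1) =
        fun u : ℝ => u ^ 2 + (2 * a * f) * u + (a ^ 2 + f ^ 2 - 1) := by funext u; ring
    rw [this]; convert h1 using 1; ring
  have hsq : HasDerivAt (fun u : ℝ => Real.sqrt (2 * a * u * f + a ^ 2 + u ^ 2 + f ^ 2 - 1))
      (1 / (2 * Real.sqrt A) * (2 * a * f + 2 * b)) b :=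
    (Real.hasDerivAt_sqrt (ne_of_gt hA)).comp b hQ
  have hN : HasDerivAt (fun u : ℝ => u * c + e * f + a * u * e + a * c * f - a ^ 2 * d + d)
      (c + a * e) b := by
    have h1 : HasDerivAt (fun u : ℝ => (c + a * e) * u + (e * f + a * c * f - a ^ 2 * d + d))
        (c + a * e) b := by
      simpa using ((hasDerivAt_id b).const_mul (c + a * e)).add_const (e * f + a * c * f - a ^ 2 * d + d)
    have : (fun u : ℝ => u * c + e * f + a * u * e + a * c * f - a ^ 2 * d + d) =
        fun u : ℝ => (c + a * e) * u + (e * f + a * c * f - a ^ 2 * d + d) := by funext u; ring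
    rw [this]; exact h1
  have hden : HasDerivAt
      (fun u : ℝ => Real.sqrt (2 * a * u * f + a ^ 2 + u ^ 2 + f ^ 2 - 1) * Real.sqrt B)
      ((1 / (2 * Real.sqrt A) * (2 * a * f + 2 * b)) * Real.sqrt B) b := hsq.mul_const _
  have hdiv := hN.div hden (by positivity)
  simp only [Pi.div_def] at hdiv
  have hfun : (fun u => phi a u c d e f) =
      fun u : ℝ => (u * c + e * f + a * u * e + a * c * f - a ^ 2 * d + d) /
        (Real.sqrt (2 * a * u * f + a ^ 2 + u ^ 2 + f ^ 2 - 1) * Real.sqrt B) := by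
    funext u; unfold phi; rw [hBdef]
  rw [hfun]
  refine hdiv.congr_deriv ?_; symm
  rw [← hAdef]
  have hA2 : Real.sqrt A ^ 2 = A := Real.sq_sqrt hA.le
  field_simp
  linear_combination (((a ^ 2 - 1) * ((b + a * f) * (d + e * f) - (c + a * e) * (f ^ 2 - 1)) -
      A * (c + a * e))) * hA2 - A * (c + a * e) * hAdef

lemma key_mono (a c d f b e t s : ℝ) (ha : 1 ≤ a) (hd1 : 1 ≤ d) (hf : 1 ≤ f)
    (hb : 1 ≤ b) (ht : t ≤ 0) (hs : s ≤ 0) (hbt : 1 ≤ b + t) (hes : 1 ≤ e + s)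
    (h0 : (a ^ 2 - 1) * ((b + a * f) * (d + e * f) - (c + a * e) * (f ^ 2 - 1)) ≤ 0) :
    (a ^ 2 - 1) * ((b + t + a * f) * (d + (e + s) * f) - (c + a * (e + s)) * (f ^ 2 - 1)) ≤ 0 := by
  have ha2 : 0 ≤ a ^ 2 - 1 := by nlinarith
  have k1 : 0 ≤ d + (e + s) * f := by nlinarith
  have k2 : 0 ≤ b * f + a := by nlinarith
  nlinarith [mul_nonneg (mul_nonneg ha2 (neg_nonneg.2 ht)) k1,
    mul_nonneg (mul_nonneg ha2 (neg_nonneg.2 hs)) k2]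

lemma denom_pos {a b c e f : ℝ} (ha : 1 ≤ a) (hb : 1 ≤ b) (hc : 1 ≤ c) (he : 1 ≤ e)
    (hf : 1 ≤ f) :
    0 < (2 * a * b * f + a ^ 2 + b ^ 2 + f ^ 2 - 1) *
        Real.sqrt (2 * a * b * f + a ^ 2 + b ^ 2 + f ^ 2 - 1) *
        Real.sqrt (2 * a * c * e + a ^ 2 + c ^ 2 + e ^ 2 - 1) := by
  have hA := quadA_pos ha hb hf
  have hB := quadA_pos ha hc he
  exact mul_pos (mul_pos hA (Real.sqrt_pos.mpr hA)) (Real.sqrt_pos.mpr hB)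

lemma master (a c d f b e : ℝ) (ha : 1 ≤ a) (hc : 1 ≤ c) (hd1 : 1 ≤ d) (hf : 1 ≤ f)
    (hb : 1 ≤ b) (he : 1 ≤ e)
    (hder : deriv (fun u => phi a u c d e f) b ≤ 0) :
    (∀ t s : ℝ, t ≤ 0 → s ≤ 0 → 1 ≤ b + t → 1 ≤ e + s →
      deriv (fun u => phi a u c d (e + s) f) (b + t) ≤ 0) ∧
    (∀ b', 1 ≤ b' → b' ≤ b → phi a b c d e f ≤ phi a b' c d e f) := by
  rw [(hasDerivAt_phi2 a c d e f b ha hc he hf hb).deriv] at hder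
  have hnum : (a ^ 2 - 1) * ((b + a * f) * (d + e * f) - (c + a * e) * (f ^ 2 - 1)) ≤ 0 := by
    rcases div_nonpos_iff.mp hder with ⟨h1, h2⟩ | ⟨h1, h2⟩
    · have := denom_pos ha hb hc he hf; linarith
    · exact h1
  constructor
  · intro t s ht hs hbt hes
    rw [(hasDerivAt_phi2 a c d (e + s) f (b + t) ha hc hes hf hbt).deriv]
    exact div_nonpos_of_nonpos_of_nonneg
      (key_mono a c d f b e t s ha hd1 hf hb ht hs hbt hes hnum)
      (denom_pos ha hbt hc hes hf).le
  · intro b' hb' hbb'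
    have hant : AntitoneOn (fun u => phi a u c d e f) (Set.Icc b' b) := by
      apply antitoneOn_of_deriv_nonpos (convex_Icc b' b)
      · intro u hu
        exact (hasDerivAt_phi2 a c d e f u ha hc he hf (hb'.trans hu.1)).continuousAt.continuousWithinAt
      · intro u hu
        rw [interior_Icc] at hu
        exact ((hasDerivAt_phi2 a c d e f u ha hc he hf (hb'.trans hu.1.le)).differentiableAt).differentiableWithinAt
      · intro u hu
        rw [interior_Icc] at hu
        have hu1 : 1 ≤ u := hb'.trans hu.1.le
        rw [(hasDerivAt_phi2 a c d e f u ha hc he hf hu1).deriv]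
        apply div_nonpos_of_nonpos_of_nonneg _ (denom_pos ha hu1 hc he hf).le
        have hk := key_mono a c d f b e (u - b) 0 ha hd1 hf hb (by linarith [hu.2])
          le_rfl (by linarith) (by linarith) hnum
        rwa [show (a ^ 2 - 1) * ((u + a * f) * (d + e * f) - (c + a * e) * (f ^ 2 - 1)) =
          (a ^ 2 - 1) * ((b + (u - b) + a * f) * (d + (e + 0) * f) -
            (c + a * (e + 0)) * (f ^ 2 - 1)) from by ring]
    exact hant (Set.mem_Icc.mpr ⟨le_refl b', hbb'⟩) (Set.mem_Icc.mpr ⟨hbb', le_refl b⟩) hbb'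


lemma phi_symm1 (a b c d e f : ℝ) : phi a b c d e f = phi a c b d f e := by
  unfold phi; ring_nf

lemma phi_symm2 (a b c d e f : ℝ) : phi a b c d e f = phi a e f d b c := by
  unfold phi; ring_nf

lemma phi_symm3 (a b c d e f : ℝ) : phi a b c d e f = phi a f e d c b := by
  unfold phi; ring_nf


lemma main_case (x : Fin 6 → ℝ) (hx : ∀ j, 1 ≤ x j) (i ih : Fin 6) (hne : i ≠ ih)
    (a c d f : ℝ) (ha : 1 ≤ a) (hc : 1 ≤ c) (hd1 : 1 ≤ d) (hf : 1 ≤ f)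
    (Hfun : ∀ z : Fin 6 → ℝ, (∀ j, j ≠ i → j ≠ ih → z j = x j) →
      (fun u => phiV (Function.update z i u)) = fun u => phi a u c d (z ih) f)
    (hd : pphi i x ≤ 0) :
    (∀ t s : ℝ, t ≤ 0 → s ≤ 0 →
        (∀ j, 1 ≤ (x + t • (Pi.single i 1 : Fin 6 → ℝ) + s • (Pi.single ih 1 : Fin 6 → ℝ)) j) →
        pphi i (x + t • (Pi.single i 1 : Fin 6 → ℝ) + s • (Pi.single ih 1 : Fin 6 → ℝ)) ≤ 0) ∧
      (∀ y : Fin 6 → ℝ, 1 ≤ y i → y i ≤ x i → (∀ j, j ≠ i → y j = x j) →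
        phiV x ≤ phiV y) := by
  have hb := hx i
  have he := hx ih
  have hder : deriv (fun u => phi a u c d (x ih) f) (x i) ≤ 0 := by
    have h := Hfun x (fun j _ _ => rfl)
    unfold pphi at hd; rw [h] at hd; exact hd
  obtain ⟨P1, P2⟩ := master a c d f (x i) (x ih) ha hc hd1 hf hb he hder
  constructor
  · intro t s ht hs hco
    set x' := x + t • (Pi.single i 1 : Fin 6 → ℝ) + s • (Pi.single ih 1 : Fin 6 → ℝ) with hx'
    have hx'i : x' i = x i + t := by
      simp [hx', Pi.single_apply, hne, (Ne.symm hne)]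
    have hx'ih : x' ih = x ih + s := by
      simp [hx', Pi.single_apply, hne, (Ne.symm hne)]
    have hx'j : ∀ j, j ≠ i → j ≠ ih → x' j = x j := by
      intro j hj1 hj2; simp [hx', Pi.single_apply, hj1, hj2]
    have h := Hfun x' hx'j
    unfold pphi
    rw [h, hx'i, hx'ih]
    have h1 : 1 ≤ x i + t := by rw [← hx'i]; exact hco i
    have h2 : 1 ≤ x ih + s := by rw [← hx'ih]; exact hco ih
    exact P1 t s ht hs h1 h2
  · intro y hy1 hy2 hyj
    have hyx : y = Function.update x i (y i) := by
      funext j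
      rcases eq_or_ne j i with h | h
      · subst h; simp
      · rw [Function.update_of_ne h, hyj j h]
    have h1 : phiV x = phi a (x i) c d (x ih) f := by
      have h := congrFun (Hfun x (fun _ _ _ => rfl)) (x i)
      rwa [Function.update_eq_self] at h
    have h2 : phiV y = phi a (y i) c d (x ih) f := by
      have h := congrFun (Hfun x (fun _ _ _ => rfl)) (y i)
      rw [hyx]; simpa using h
    rw [h1, h2]
    exact P2 (y i) hy1 hy2


theorem phi_partial_nonpos_propagates (x : Fin 6 → ℝ) (hx : ∀ j, 1 ≤ x j)
    (i ih : Fin 6) (hpair : IsPairedIndex i ih) (hd : pphi i x ≤ 0) :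
    (∀ t s : ℝ, t ≤ 0 → s ≤ 0 →
        (∀ j, 1 ≤ (x + t • (Pi.single i 1 : Fin 6 → ℝ) + s • (Pi.single ih 1 : Fin 6 → ℝ)) j) →
        pphi i (x + t • (Pi.single i 1 : Fin 6 → ℝ) + s • (Pi.single ih 1 : Fin 6 → ℝ)) ≤ 0) ∧
      (∀ y : Fin 6 → ℝ, 1 ≤ y i → y i ≤ x i → (∀ j, j ≠ i → y j = x j) →
        phiV x ≤ phiV y) := by
  rcases hpair with ⟨hi, hih⟩ | ⟨hi, hih⟩ | ⟨hi, hih⟩ | ⟨hi, hih⟩ <;> subst hi <;> subst hih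
  · refine main_case x hx 1 4 (by decide) (x 0) (x 2) (x 3) (x 5)
      (hx 0) (hx 2) (hx 3) (hx 5) ?_ hd
    intro z hz; funext u
    have e0 := hz 0 (by decide) (by decide)
    have e2 := hz 2 (by decide) (by decide)
    have e3 := hz 3 (by decide) (by decide)
    have e5 := hz 5 (by decide) (by decide)
    simp [phiV, Function.update, e0, e2, e3, e5]
  · refine main_case x hx 2 5 (by decide) (x 0) (x 1) (x 3) (x 4)
      (hx 0) (hx 1) (hx 3) (hx 4) ?_ hd
    intro z hz; funext u
    have e0 := hz 0 (by decide) (by decide)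
    have e1 := hz 1 (by decide) (by decide)
    have e3 := hz 3 (by decide) (by decide)
    have e4 := hz 4 (by decide) (by decide)
    simp only [phiV, Function.update, e0, e1, e3, e4]
    simp [e0, e1, e3, e4]
    exact phi_symm1 (x 0) (x 1) u (x 3) (x 4) (z 5)
  · refine main_case x hx 4 1 (by decide) (x 0) (x 5) (x 3) (x 2)
      (hx 0) (hx 5) (hx 3) (hx 2) ?_ hd
    intro z hz; funext u
    have e0 := hz 0 (by decide) (by decide)
    have e2 := hz 2 (by decide) (by decide)
    have e3 := hz 3 (by decide) (by decide)
    have e5 := hz 5 (by decide) (by decide)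
    simp [phiV, Function.update, e0, e2, e3, e5]
    exact phi_symm2 (x 0) (z 1) (x 2) (x 3) u (x 5)
  · refine main_case x hx 5 2 (by decide) (x 0) (x 4) (x 3) (x 1)
      (hx 0) (hx 4) (hx 3) (hx 1) ?_ hd
    intro z hz; funext u
    have e0 := hz 0 (by decide) (by decide)
    have e1 := hz 1 (by decide) (by decide)
    have e3 := hz 3 (by decide) (by decide)
    have e4 := hz 4 (by decide) (by decide)
    simp [phiV, Function.update, e0, e1, e3, e4]
    exact phi_symm3 (x 0) (x 1) (z 2) (x 3) (x 4) u
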